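/- Define the real numbers h = sin(π/5)/sin(π/3) − (1 + sin(7π/15)/sin(π/3))·sin(π/30)/sin(19π/30) multiplied by sin(11π/30), and h₁ = sin(π/10); that is, h = sin(11π/30)·( sin(π/5)/sin(π/3) − (1 + sin(7π/15)/sin(π/3))·sin(π/30)/sin(19π/30) ). Then the ratio h/h₁ is irrational. -/

import Mathlib

open Real

lemma sin_mul_sin'' (x y : ℝ) :
    Real.sin x * Real.sin y = (Real.cos (x - y) - Real.cos (x + y)) / 2 := by
  rw [Real.cos_sub, Real.cos_add]; ring

lemma irrational_sqrt_three : Irrational (Real.sqrt 3) := by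
  simpa using (Nat.prime_three).irrational_sqrt

lemma irrational_sqrt_five : Irrational (Real.sqrt 5) := by
  simpa using (by norm_num : Nat.Prime 5).irrational_sqrt

/-- The ratio `h/h₁` of heights of two cylinders of the surface unfolded
from the triangle `(π/5, π/3, 7π/15)` is irrational. -/
theorem stmt_11 (h h₁ : ℝ)
    (hh : h = Real.sin (11 * π / 30) *
      (Real.sin (π / 5) / Real.sin (π / 3) -
        (1 + Real.sin (7 * π / 15) / Real.sin (π / 3)) *
          Real.sin (π / 30) / Real.sin (19 * π / 30)))
    (hh₁ : h₁ = Real.sin (π / 10)) :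
    Irrational (h / h₁) := by
  have hπ : (0:ℝ) < π := Real.pi_pos
  have s3 : Real.sin (π/3) = Real.sqrt 3 / 2 := Real.sin_pi_div_three
  have sqrt3_pos : (0:ℝ) < Real.sqrt 3 := Real.sqrt_pos.mpr (by norm_num)
  have sqrt3_sq : Real.sqrt 3 ^ 2 = 3 := Real.sq_sqrt (by norm_num)
  have sqrt5_sq : Real.sqrt 5 ^ 2 = 5 := Real.sq_sqrt (by norm_num)
  have sqrt5_pos : (0:ℝ) < Real.sqrt 5 := Real.sqrt_pos.mpr (by norm_num)
  have s3ne : Real.sin (π/3) ≠ 0 := by rw [s3]; positivity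
  have s11pos : 0 < Real.sin (11*π/30) :=
    Real.sin_pos_of_pos_of_lt_pi (by positivity) (by nlinarith)
  have h19 : Real.sin (19*π/30) = Real.sin (11*π/30) := by
    rw [show (19:ℝ)*π/30 = π - 11*π/30 by ring, Real.sin_pi_sub]
  have key : Real.sin (11*π/30) * Real.sin (π/5)
      - Real.sin (7*π/15) * Real.sin (π/30) = Real.sqrt 3 / 4 := by
    rw [sin_mul_sin'', sin_mul_sin'',
      show 11*π/30 - π/5 = π/6 by ring,
      show 11*π/30 + π/5 = π - 13*π/30 by ring,
      show 7*π/15 - π/30 = 13*π/30 by ring,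
      show 7*π/15 + π/30 = π/2 by ring,
      Real.cos_pi_sub, Real.cos_pi_div_two, Real.cos_pi_div_six]
    ring
  have s11ne : Real.sin (11*π/30) ≠ 0 := ne_of_gt s11pos
  have hform : h = 1/2 - Real.sin (π/30) := by
    rw [hh, h19]
    field_simp
    rw [show π * 7 / 15 = 7 * π / 15 by ring, s3]
    linear_combination 2 * key
  have hC : Real.cos (π/5) = (1 + Real.sqrt 5)/4 := Real.cos_pi_div_five
  have h30 : Real.sin (π/30)
      = Real.sin (π/5) * (Real.sqrt 3/2) - (1 + Real.sqrt 5)/4 * (1/2) := by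
    rw [show π/30 = π/5 - π/6 by ring, Real.sin_sub, Real.cos_pi_div_six,
      Real.sin_pi_div_six, hC]
  have h10 : Real.sin (π/10) = (Real.sqrt 5 - 1)/4 := by
    rw [show π/10 = π/2 - 2*(π/5) by ring, Real.sin_pi_div_two_sub,
      Real.cos_two_mul, hC]
    linear_combination (1/8) * sqrt5_sq
  have h1pos : 0 < h₁ := by
    rw [hh₁, h10]; nlinarith [sqrt5_sq, sqrt5_pos]
  have pyth : Real.sin (π/5)^2 = 1 - ((1 + Real.sqrt 5)/4)^2 := by
    have := Real.sin_sq_add_cos_sq (π/5); rw [hC] at this; linarith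
  rintro ⟨r, hr⟩
  have hEq : h = (r:ℝ) * h₁ := by
    field_simp at hr; linarith [hr]
  have eq1 : Real.sqrt 3 * Real.sin (π/5)
      = ((5/4 + r/2 : ℚ):ℝ) + ((1/4 - r/2 : ℚ):ℝ) * Real.sqrt 5 := by
    push_cast
    rw [hh₁, h10] at hEq
    rw [hform, h30] at hEq
    linarith [hEq]
  have eq2 : 3 * Real.sin (π/5)^2
      = (((5/4 + r/2 : ℚ):ℝ) + ((1/4 - r/2 : ℚ):ℝ) * Real.sqrt 5)^2 := by
    rw [← eq1, mul_pow, sqrt3_sq]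
  have E5 : (((5/4 + r/2)^2 + 5*(1/4 - r/2)^2 - 15/8 : ℚ):ℝ)
      + ((2*(5/4 + r/2)*(1/4 - r/2) + 3/8 : ℚ):ℝ) * Real.sqrt 5 = 0 := by
    push_cast at eq2 ⊢
    linear_combination (-1)*eq2 + 3*pyth
      + (-((1/4 : ℝ) - (r:ℝ)/2)^2 - 3/16) * sqrt5_sq
  by_cases hp : (2*(5/4 + r/2)*(1/4 - r/2) + 3/8 : ℚ) = 0
  · have hr2 : (r^2 + 2*r - 2 : ℚ) = 0 := by linear_combination (-2)*hp
    have hsq : ((r:ℝ) + 1)^2 = 3 := by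
      have : ((r^2 + 2*r - 2 : ℚ) : ℝ) = 0 := by exact_mod_cast hr2
      push_cast at this; linarith [this]
    have : Real.sqrt 3 = |(r:ℝ) + 1| := by
      rw [← Real.sqrt_sq_eq_abs, hsq]
    exact irrational_sqrt_three ⟨|r + 1|, by push_cast [this]; ring⟩
  · have hpne : ((2*(5/4 + r/2)*(1/4 - r/2) + 3/8 : ℚ):ℝ) ≠ 0 := by
      exact_mod_cast hp
    have h1' : ((2*(5/4 + r/2)*(1/4 - r/2) + 3/8 : ℚ):ℝ) * Real.sqrt 5
        = ((-((5/4 + r/2)^2 + 5*(1/4 - r/2)^2 - 15/8) : ℚ):ℝ) := by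
      push_cast at E5 ⊢; linarith
    have : Real.sqrt 5
        = ((-((5/4 + r/2)^2 + 5*(1/4 - r/2)^2 - 15/8) /
            (2*(5/4 + r/2)*(1/4 - r/2) + 3/8) : ℚ):ℝ) := by
      rw [Rat.cast_div, eq_div_iff hpne, mul_comm]
      exact h1'
    exact irrational_sqrt_five ⟨_, this.symm⟩
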